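/- Fix n ≥ 1, τ_x > 0, τ_y > 0, and set γ = τ_x/(τ_x+τ_y). Let G be an n×n real matrix with nonnegative entries, zero diagonal, and row sums d_i^out = Σ_{j≠i} G i j < 1, let c = (I − γ·G)⁻¹ 𝟙, and set b_i = (1−γ)·c_i. Let ε_1, …, ε_n, ε_0 be jointly independent square-integrable real random variables on a probability space, each with mean zero, with Var(ε_i) = 1/τ_x for 1 ≤ i ≤ n and Var(ε_0) = 1/τ_y, and define X_i = (1−b_i)·ε_i + b_i·ε_0. Then for every i: E[−(1−d_i^out)·X_i² − Σ_{j≠i} G i j ·(X_i − X_j)²] = τ_x⁻¹(1−γ)·( c_i² − Σ_{j≠i} G i j · c_j·(c_j − 2) ) − τ_x⁻¹(1 + d_i^out). -/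

import Mathlib

open Matrix Finset MeasureTheory ProbabilityTheory

/-- Agent `i`'s ex-ante equilibrium payoff in the networked beauty
contest equals `τx⁻¹(1-γ)(c_i² - Σ_{j≠i} g_ij c_j (c_j - 2)) - τx⁻¹(1 + d_i^out)`. -/
theorem stmt4 (n : ℕ) (hn : 1 ≤ n) (τx τy : ℝ) (hτx : 0 < τx) (hτy : 0 < τy)
    (γ : ℝ) (hγ : γ = τx / (τx + τy))
    (G : Matrix (Fin n) (Fin n) ℝ)
    (hposG : ∀ i j, 0 ≤ G i j) (hdiag : ∀ i, G i i = 0)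
    (hrow : ∀ i, ∑ j ∈ Finset.univ.erase i, G i j < 1)
    (c : Fin n → ℝ) (hc : c = (1 - γ • G)⁻¹ *ᵥ fun _ => 1)
    (b : Fin n → ℝ) (hb : ∀ i, b i = (1 - γ) * c i)
    {Ω : Type*} [MeasurableSpace Ω] (μ : Measure Ω) [IsProbabilityMeasure μ]
    (ε : Option (Fin n) → Ω → ℝ)
    (hindep : iIndepFun ε μ)
    (hL2 : ∀ k, MemLp (ε k) 2 μ)
    (hmean : ∀ k, ∫ ω, ε k ω ∂μ = 0)
    (hvarx : ∀ i : Fin n, variance (ε (some i)) μ = 1 / τx)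
    (hvary : variance (ε none) μ = 1 / τy)
    (X : Fin n → Ω → ℝ)
    (hX : ∀ i ω, X i ω = (1 - b i) * ε (some i) ω + b i * ε none ω) :
    ∀ i, (∫ ω, (-(1 - ∑ j ∈ Finset.univ.erase i, G i j) * (X i ω) ^ 2
          - ∑ j ∈ Finset.univ.erase i, G i j * (X i ω - X j ω) ^ 2) ∂μ)
      = τx⁻¹ * (1 - γ) * ((c i) ^ 2
            - ∑ j ∈ Finset.univ.erase i, G i j * (c j * (c j - 2)))
        - τx⁻¹ * (1 + ∑ j ∈ Finset.univ.erase i, G i j) := by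
  intro i
  -- basic facts about γ
  have hτxy : 0 < τx + τy := by linarith
  have hγ0 : 0 < γ := by rw [hγ]; positivity
  have hγ1 : γ < 1 := by
    rw [hγ, div_lt_one hτxy]; linarith
  have hτy2 : τy = (1 - γ) * τx / γ := by
    rw [hγ]
    field_simp
    ring
  -- invertibility of 1 - γ • G
  have hdet : (1 - γ • G).det ≠ 0 := by
    apply det_ne_zero_of_sum_row_lt_diag
    intro k
    have h1 : ∀ j ∈ Finset.univ.erase k, ‖(1 - γ • G) k j‖ = γ * G k j := by
      intro j hj
      have hjk : j ≠ k := (Finset.mem_erase.mp hj).1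
      have : (1 - γ • G) k j = -(γ * G k j) := by
        simp [Matrix.sub_apply, Matrix.one_apply_ne' hjk]
      rw [this, norm_neg, Real.norm_eq_abs,
          abs_of_nonneg (mul_nonneg hγ0.le (hposG k j))]
    rw [Finset.sum_congr rfl h1, ← Finset.mul_sum]
    have hkk : (1 - γ • G) k k = 1 := by
      simp [Matrix.sub_apply, hdiag k]
    rw [hkk]
    have hs0 : (0:ℝ) ≤ ∑ j ∈ Finset.univ.erase k, G k j :=
      Finset.sum_nonneg fun j _ => hposG k j
    have hs1 : ∑ j ∈ Finset.univ.erase k, G k j < 1 := hrow k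
    have : γ * ∑ j ∈ Finset.univ.erase k, G k j < 1 := by nlinarith
    simpa using this
  have hAc : (1 - γ • G) *ᵥ c = fun _ => 1 := by
    rw [hc, Matrix.mulVec_mulVec, Matrix.mul_nonsing_inv _ (isUnit_iff_ne_zero.mpr hdet),
        Matrix.one_mulVec]
  -- Katz–Bonacich equation for c
  have hci : c i = 1 + γ * ∑ j ∈ Finset.univ.erase i, G i j * c j := by
    have h := congrFun hAc i
    have h2 : ∀ j, (1 - γ • G) i j * c j
        = (if j = i then c j else 0) - γ * (G i j * c j) := by
      intro j
      by_cases hji : j = i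
      · subst hji; simp [Matrix.sub_apply, hdiag j]
      · simp [Matrix.sub_apply, Matrix.one_apply_ne' hji, hji]; ring
    rw [Matrix.mulVec, dotProduct] at h
    rw [Finset.sum_congr rfl fun j _ => h2 j, Finset.sum_sub_distrib,
        Finset.sum_ite_eq' Finset.univ i c, ← Finset.mul_sum] at h
    simp only [Finset.mem_univ, if_pos] at h
    have hsplit : ∑ j, G i j * c j = ∑ j ∈ Finset.univ.erase i, G i j * c j := by
      rw [← Finset.sum_erase_add Finset.univ _ (Finset.mem_univ i), hdiag i]
      ring
    rw [hsplit] at h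
    linarith
  -- probabilistic computations
  have hint : ∀ k, Integrable (ε k) μ := fun k => (hL2 k).integrable one_le_two
  have hmul : ∀ j k : Option (Fin n), Integrable (fun ω => ε j ω * ε k ω) μ := by
    intro j k
    by_cases h : j = k
    · subst h; simpa [pow_two] using (hL2 j).integrable_sq
    · exact (hindep.indepFun h).integrable_mul (hint j) (hint k)
  have hEmul : ∀ j k : Option (Fin n), j ≠ k → ∫ ω, ε j ω * ε k ω ∂μ = 0 := by
    intro j k h
    have h0 := (hindep.indepFun h).integral_mul_eq_mul_integral (hint j).aestronglyMeasurable (hint k).aestronglyMeasurable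
    have h1 : (ε j * ε k) = fun ω => ε j ω * ε k ω := rfl
    rw [h1] at h0
    rw [h0, hmean j, hmean k, mul_zero]
  have hEsq : ∀ k, ∫ ω, ε k ω * ε k ω ∂μ = variance (ε k) μ := by
    intro k
    rw [variance_eq_sub (hL2 k), hmean k]
    simp [pow_two]
  have hEpq : ∀ p q : Fin n, ∫ ω, ε (some p) ω * ε (some q) ω ∂μ
      = if p = q then 1 / τx else 0 := by
    intro p q
    by_cases h : p = q
    · subst h; rw [hEsq, hvarx, if_pos rfl]
    · rw [hEmul _ _ (by simpa using h), if_neg h]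
  have hpt : ∀ p q : Fin n, ∀ ω, X p ω * X q ω =
      (1 - b p) * (1 - b q) * (ε (some p) ω * ε (some q) ω)
      + (1 - b p) * b q * (ε (some p) ω * ε none ω)
      + b p * (1 - b q) * (ε none ω * ε (some q) ω)
      + b p * b q * (ε none ω * ε none ω) := by
    intro p q ω; rw [hX, hX]; ring
  have hXmul_int : ∀ p q : Fin n, Integrable (fun ω => X p ω * X q ω) μ := by
    intro p q
    rw [show (fun ω => X p ω * X q ω) = _ from funext (hpt p q)]
    exact ((((hmul _ _).const_mul _).add ((hmul _ _).const_mul _)).add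
      ((hmul _ _).const_mul _)).add ((hmul _ _).const_mul _)
  have hEXX : ∀ p q : Fin n, ∫ ω, X p ω * X q ω ∂μ
      = (if p = q then (1 - b p) ^ 2 / τx else 0) + b p * b q / τy := by
    intro p q
    rw [show (fun ω => X p ω * X q ω) = _ from funext (hpt p q)]
    have I1 : Integrable (fun ω => (1 - b p) * (1 - b q) * (ε (some p) ω * ε (some q) ω)) μ :=
      (hmul _ _).const_mul _
    have I2 : Integrable (fun ω => (1 - b p) * b q * (ε (some p) ω * ε none ω)) μ :=
      (hmul _ _).const_mul _
    have I3 : Integrable (fun ω => b p * (1 - b q) * (ε none ω * ε (some q) ω)) μ :=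
      (hmul _ _).const_mul _
    have I4 : Integrable (fun ω => b p * b q * (ε none ω * ε none ω)) μ :=
      (hmul _ _).const_mul _
    have I12 : Integrable (fun ω => (1 - b p) * (1 - b q) * (ε (some p) ω * ε (some q) ω)
        + (1 - b p) * b q * (ε (some p) ω * ε none ω)) μ := I1.add I2
    have I123 : Integrable (fun ω => (1 - b p) * (1 - b q) * (ε (some p) ω * ε (some q) ω)
        + (1 - b p) * b q * (ε (some p) ω * ε none ω)
        + b p * (1 - b q) * (ε none ω * ε (some q) ω)) μ := I12.add I3
    rw [integral_add I123 I4, integral_add I12 I3, integral_add I1 I2,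
        integral_const_mul, integral_const_mul, integral_const_mul, integral_const_mul]
    rw [hEpq, hEmul _ _ (by simp), hEmul _ _ (by simp), hEsq, hvary]
    by_cases h : p = q
    · subst h; simp; ring
    · simp [h, div_eq_mul_inv]
  -- rewrite the integrand
  have hfun : (fun ω => -(1 - ∑ j ∈ Finset.univ.erase i, G i j) * X i ω ^ 2
        - ∑ j ∈ Finset.univ.erase i, G i j * (X i ω - X j ω) ^ 2)
      = (fun ω => -(1 - ∑ j ∈ Finset.univ.erase i, G i j) * (X i ω * X i ω)
        - ∑ j ∈ Finset.univ.erase i, (G i j * (X i ω * X i ω)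
            - 2 * G i j * (X i ω * X j ω) + G i j * (X j ω * X j ω))) := by
    funext ω
    have h1 : ∀ j, G i j * (X i ω - X j ω) ^ 2
        = G i j * (X i ω * X i ω) - 2 * G i j * (X i ω * X j ω)
          + G i j * (X j ω * X j ω) := fun j => by ring
    simp only [h1]
    rw [pow_two]
  rw [hfun]
  have J1 : ∀ p q : Fin n, ∀ r : ℝ, Integrable (fun ω => r * (X p ω * X q ω)) μ :=
    fun p q r => (hXmul_int p q).const_mul r
  have J2 : ∀ j : Fin n, Integrable (fun ω => G i j * (X i ω * X i ω)
      - 2 * G i j * (X i ω * X j ω)) μ := fun j => (J1 i i _).sub (J1 i j _)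
  have J3 : ∀ j : Fin n, Integrable (fun ω => G i j * (X i ω * X i ω)
      - 2 * G i j * (X i ω * X j ω) + G i j * (X j ω * X j ω)) μ :=
    fun j => (J2 j).add (J1 j j _)
  have J4 : Integrable (fun ω => ∑ j ∈ Finset.univ.erase i, (G i j * (X i ω * X i ω)
      - 2 * G i j * (X i ω * X j ω) + G i j * (X j ω * X j ω))) μ :=
    integrable_finset_sum _ fun j _ => J3 j
  rw [integral_sub (J1 i i _) J4, integral_const_mul,
      integral_finset_sum _ (fun j _ => J3 j)]
  have hI2 : ∀ j : Fin n, ∫ ω, (G i j * (X i ω * X i ω)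
        - 2 * G i j * (X i ω * X j ω) + G i j * (X j ω * X j ω)) ∂μ
      = G i j * ∫ ω, X i ω * X i ω ∂μ - 2 * G i j * ∫ ω, X i ω * X j ω ∂μ
        + G i j * ∫ ω, X j ω * X j ω ∂μ := by
    intro j
    rw [integral_add (J2 j) (J1 j j _), integral_sub (J1 i i _) (J1 i j _),
        integral_const_mul, integral_const_mul, integral_const_mul]
  simp only [hI2]
  have hEii : ∫ ω, X i ω * X i ω ∂μ
      = (1 - (1 - γ) * c i) ^ 2 / τx + ((1 - γ) * c i) * ((1 - γ) * c i) / τy := by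
    rw [hEXX i i, if_pos rfl, hb i]
  -- reduce the big sum to three scalar sums
  have hsum2 : ∑ j ∈ Finset.univ.erase i, (G i j * ∫ ω, X i ω * X i ω ∂μ
        - 2 * G i j * ∫ ω, X i ω * X j ω ∂μ + G i j * ∫ ω, X j ω * X j ω ∂μ)
      = ((1 - (1 - γ) * c i) ^ 2 / τx + ((1 - γ) * c i) * ((1 - γ) * c i) / τy + 1 / τx)
          * ∑ j ∈ Finset.univ.erase i, G i j
        + (-2 * ((1 - γ) * c i) * (1 - γ) / τy - 2 * (1 - γ) / τx)
          * ∑ j ∈ Finset.univ.erase i, G i j * c j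
        + ((1 - γ) ^ 2 / τx + (1 - γ) ^ 2 / τy)
          * ∑ j ∈ Finset.univ.erase i, G i j * (c j * c j) := by
    rw [Finset.mul_sum, Finset.mul_sum, Finset.mul_sum, ← Finset.sum_add_distrib,
        ← Finset.sum_add_distrib]
    apply Finset.sum_congr rfl
    intro j hj
    have hij : ¬ (i = j) := fun h => (Finset.mem_erase.mp hj).1 h.symm
    rw [hEii, hEXX i j, if_neg hij, hEXX j j, if_pos rfl, hb i, hb j]
    ring
  rw [hsum2, hEii]
  have hrhs : ∑ j ∈ Finset.univ.erase i, G i j * (c j * (c j - 2))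
      = ∑ j ∈ Finset.univ.erase i, G i j * (c j * c j)
        - 2 * ∑ j ∈ Finset.univ.erase i, G i j * c j := by
    rw [Finset.mul_sum, ← Finset.sum_sub_distrib]
    exact Finset.sum_congr rfl fun j _ => by ring
  rw [hrhs, hci, hτy2]
  have h1γ : (1:ℝ) - γ ≠ 0 := by linarith
  field_simp
  ring
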